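/- A minimal topological dynamical system (X,T) is either diam-mean equicontinuous or diam-mean sensitive. -/

import Mathlib

open Filter Metric Set
open scoped Classical

noncomputable def lowerDensity (S : Set ℕ) : ℝ :=
  Filter.atTop.liminf (fun n => (((Finset.range (n + 1)).filter (fun i => i ∈ S)).card : ℝ) / (n + 1))

noncomputable def upperDensity (S : Set ℕ) : ℝ :=
  Filter.atTop.limsup (fun n => (((Finset.range (n + 1)).filter (fun i => i ∈ S)).card : ℝ) / (n + 1))

noncomputable def densFun (S : Set ℕ) (n : ℕ) : ℝ :=
  (((Finset.range (n + 1)).filter (fun i => i ∈ S)).card : ℝ) / (n + 1)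

lemma upperDensity_eq (S : Set ℕ) : upperDensity S = Filter.atTop.limsup (densFun S) := rfl

lemma densFun_nonneg (S : Set ℕ) (n : ℕ) : 0 ≤ densFun S n := by
  apply div_nonneg (by positivity) (by positivity)

lemma densFun_le_one (S : Set ℕ) (n : ℕ) : densFun S n ≤ 1 := by
  rw [densFun, div_le_one (by positivity)]
  have h := Finset.card_filter_le (Finset.range (n + 1)) (fun i => i ∈ S)
  rw [Finset.card_range] at h
  exact_mod_cast h

lemma densFun_bddAbove (S : Set ℕ) : Filter.atTop.IsBoundedUnder (· ≤ ·) (densFun S) :=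
  isBoundedUnder_of ⟨1, densFun_le_one S⟩

lemma densFun_coboundedAbove (S : Set ℕ) : Filter.atTop.IsCoboundedUnder (· ≤ ·) (densFun S) :=
  isCoboundedUnder_le_of_le atTop (densFun_nonneg S)

lemma densFun_mono {S S' : Set ℕ} (h : S ⊆ S') (n : ℕ) : densFun S n ≤ densFun S' n := by
  have hc : ((Finset.range (n + 1)).filter (fun i => i ∈ S)).card ≤
      ((Finset.range (n + 1)).filter (fun i => i ∈ S')).card :=
    Finset.card_le_card (Finset.monotone_filter_right _ (fun i _ hi => h hi))
  rw [densFun, densFun]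
  gcongr


lemma upperDensity_mono {S S' : Set ℕ} (h : S ⊆ S') : upperDensity S ≤ upperDensity S' :=
  limsup_le_limsup (Eventually.of_forall (densFun_mono h))
    (densFun_coboundedAbove S) (densFun_bddAbove S')

/-- Shift inequality: density of the shifted-back set is at least density of `S`. -/
lemma upperDensity_shift (S : Set ℕ) (n : ℕ) :
    upperDensity S ≤ upperDensity {i : ℕ | i + n ∈ S} := by
  set A : Set ℕ := {i : ℕ | i + n ∈ S} with hA
  have key : ∀ m : ℕ, densFun S (m + n) ≤ densFun A m + (n : ℝ) / (m + 1) := by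
    intro m
    have hsub : (Finset.range (m + n + 1)).filter (fun j => j ∈ S) ⊆
        (Finset.range n) ∪ (((Finset.range (m + 1)).filter (fun i => i ∈ A)).image (· + n)) := by
      intro j hj
      simp only [Finset.mem_filter, Finset.mem_range] at hj
      rcases lt_or_ge j n with hjn | hjn
      · exact Finset.mem_union_left _ (Finset.mem_range.mpr hjn)
      · apply Finset.mem_union_right
        refine Finset.mem_image.mpr ⟨j - n, ?_, by omega⟩
        simp only [Finset.mem_filter, Finset.mem_range, hA, Set.mem_setOf_eq]
        refine ⟨by omega, ?_⟩
        have hjj : j - n + n = j := by omega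
        rw [hjj]; exact hj.2
    have hcard : ((Finset.range (m + n + 1)).filter (fun j => j ∈ S)).card ≤
        n + ((Finset.range (m + 1)).filter (fun i => i ∈ A)).card := by
      calc _ ≤ ((Finset.range n) ∪
            (((Finset.range (m + 1)).filter (fun i => i ∈ A)).image (· + n))).card :=
            Finset.card_le_card hsub
        _ ≤ (Finset.range n).card +
            (((Finset.range (m + 1)).filter (fun i => i ∈ A)).image (· + n)).card :=
            Finset.card_union_le _ _
        _ ≤ n + ((Finset.range (m + 1)).filter (fun i => i ∈ A)).card := by
            rw [Finset.card_range]
            exact Nat.add_le_add_left Finset.card_image_le n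
    set cS : ℝ := (((Finset.range (m + n + 1)).filter (fun j => j ∈ S)).card : ℝ) with hcS
    set cA : ℝ := (((Finset.range (m + 1)).filter (fun i => i ∈ A)).card : ℝ) with hcA
    have hcS0 : 0 ≤ cS := by positivity
    have hcA0 : 0 ≤ cA := by positivity
    have hcast : cS ≤ (n : ℝ) + cA := by rw [hcS, hcA]; exact_mod_cast hcard
    have h1 : densFun S (m + n) = cS / ((m : ℝ) + n + 1) := by
      rw [densFun, hcS]; push_cast; ring_nf
    have h2 : densFun A m + (n : ℝ) / (m + 1) = (cA + n) / ((m : ℝ) + 1) := by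
      rw [densFun, hcA, ← add_div]
    rw [h1, h2]
    apply div_le_div₀ (by positivity) (by linarith) (by positivity) (by linarith)
  -- limsup argument
  rw [upperDensity_eq, upperDensity_eq, ← limsup_nat_add (densFun S) n]
  have hcob : Filter.atTop.IsCoboundedUnder (· ≤ ·) (fun m => densFun S (m + n)) :=
    isCoboundedUnder_le_of_le atTop (fun m => densFun_nonneg S (m + n))
  refine le_of_forall_pos_le_add fun ε hε => ?_
  have htend : Tendsto (fun m : ℕ => (n : ℝ) / (m + 1)) atTop (nhds 0) := by
    have h2 := (tendsto_const_div_atTop_nhds_zero_nat (n : ℝ)).comp (tendsto_add_atTop_nat 1)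
    refine h2.congr fun m => ?_
    simp only [Function.comp]
    push_cast
    ring
  have hev : ∀ᶠ m in atTop, densFun S (m + n) ≤ densFun A m + ε := by
    filter_upwards [htend.eventually_le_const hε] with m hm
    exact (key m).trans (by linarith)
  have hbdd : Filter.atTop.IsBoundedUnder (· ≤ ·) (fun m => densFun A m + ε) :=
    isBoundedUnder_of ⟨1 + ε, fun m => by linarith [densFun_le_one A m]⟩
  calc limsup (fun m => densFun S (m + n)) atTop
      ≤ limsup (fun m => densFun A m + ε) atTop := limsup_le_limsup hev hcob hbdd
    _ = limsup (densFun A) atTop + ε :=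
        limsup_add_const atTop (densFun A) ε (densFun_bddAbove A) (densFun_coboundedAbove A)

theorem minimal_diamMean_dichotomy {X : Type*} [MetricSpace X] [CompactSpace X]
    (T : X → X) (hT : Continuous T)
    (hmin : ∀ x : X, Dense (Set.range fun n : ℕ => T^[n] x)) :
    (∀ x : X, ∀ ε > 0, ∃ δ > 0,
        upperDensity {i : ℕ | ε < Metric.diam ((T^[i]) '' Metric.closedBall x δ)} < ε) ∨
    (∃ ε > 0, ∀ U : Set X, IsOpen U → U.Nonempty →
        ε < upperDensity {i : ℕ | ε < Metric.diam ((T^[i]) '' U)}) := by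
  by_cases heq : (∀ x : X, ∀ ε > 0, ∃ δ > 0,
      upperDensity {i : ℕ | ε < Metric.diam ((T^[i]) '' Metric.closedBall x δ)} < ε)
  · exact Or.inl heq
  · right
    push_neg at heq
    obtain ⟨x, ε, hε, hx⟩ := heq
    refine ⟨ε / 2, by positivity, fun U hU hUne => ?_⟩
    obtain ⟨_, ⟨n, rfl⟩, hnU⟩ := (hmin x).exists_mem_open hU hUne
    have hopen : IsOpen ((T^[n]) ⁻¹' U) := hU.preimage (hT.iterate n)
    obtain ⟨r, hr, hball⟩ := Metric.isOpen_iff.mp hopen x hnU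
    set δ := r / 2 with hδ
    have hδpos : 0 < δ := by positivity
    have hsubU : (T^[n]) '' Metric.closedBall x δ ⊆ U := by
      rintro y ⟨z, hz, rfl⟩
      apply hball
      rw [Metric.mem_ball]
      have hz' : dist z x ≤ δ := Metric.mem_closedBall.mp hz
      rw [hδ] at hz'
      linarith
    have hεS := hx δ hδpos
    set S : Set ℕ := {i : ℕ | ε < Metric.diam ((T^[i]) '' Metric.closedBall x δ)} with hSdef
    have hsub : {i : ℕ | i + n ∈ S} ⊆
        {i : ℕ | ε / 2 < Metric.diam ((T^[i]) '' U)} := by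
      intro i hi
      simp only [hSdef, Set.mem_setOf_eq] at hi ⊢
      have himg : (T^[i + n]) '' Metric.closedBall x δ ⊆ (T^[i]) '' U := by
        rw [Function.iterate_add T i n, Set.image_comp]
        exact Set.image_mono hsubU
      have hd : Metric.diam ((T^[i + n]) '' Metric.closedBall x δ) ≤
          Metric.diam ((T^[i]) '' U) :=
        Metric.diam_mono himg
          (Bornology.IsBounded.subset isBounded_of_compactSpace (Set.subset_univ _))
      linarith
    calc ε / 2 < ε := by linarith
      _ ≤ upperDensity S := hεS
      _ ≤ upperDensity {i : ℕ | i + n ∈ S} := upperDensity_shift S n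
      _ ≤ _ := upperDensity_mono hsub
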